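/- arXiv:1608.02432 — 8 statements merged into one kernel-verified Lean document; each statement's English description precedes it below -/
import Mathlib

section
/- Let O and O' be points of the Euclidean plane EuclideanSpace ℝ (Fin 2) with x = dist O O' satisfying 0 < x ≤ 2r for some r > 0. Then the intersection of the closed balls of radius r centered at O and at O' is contained in the closed ball of radius √(r² − x²/4) centered at the midpoint of O and O', and moreover √(r² − x²/4) < r. -/
open Metric

theorem disk_intersection_in_smaller_disk
    (O O' : EuclideanSpace ℝ (Fin 2)) (r x : ℝ) (hr : 0 < r)
    (hx : x = dist O O') (hx0 : 0 < x) (hx2r : x ≤ 2 * r) :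
    closedBall O r ∩ closedBall O' r ⊆
      closedBall (midpoint ℝ O O') (Real.sqrt (r ^ 2 - x ^ 2 / 4)) ∧
    Real.sqrt (r ^ 2 - x ^ 2 / 4) < r := by
  constructor
  · rintro p ⟨hp1, hp2⟩
    rw [mem_closedBall] at hp1 hp2 ⊢
    have hA := EuclideanGeometry.dist_sq_add_dist_sq_eq_two_mul_dist_midpoint_sq_add_half_dist_sq
      p O O'
    have h1 : dist p O ^ 2 ≤ r ^ 2 := by
      have := dist_nonneg (x := p) (y := O); nlinarith
    have h2 : dist p O' ^ 2 ≤ r ^ 2 := by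
      have := dist_nonneg (x := p) (y := O'); nlinarith
    have hsq : dist p (midpoint ℝ O O') ^ 2 ≤ r ^ 2 - x ^ 2 / 4 := by
      rw [hx]; nlinarith
    calc dist p (midpoint ℝ O O') = Real.sqrt (dist p (midpoint ℝ O O') ^ 2) := by
          rw [Real.sqrt_sq dist_nonneg]
      _ ≤ Real.sqrt (r ^ 2 - x ^ 2 / 4) := Real.sqrt_le_sqrt hsq
  · have h : r ^ 2 - x ^ 2 / 4 < r ^ 2 := by nlinarith
    calc Real.sqrt (r ^ 2 - x ^ 2 / 4) < Real.sqrt (r ^ 2) := by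
          apply Real.sqrt_lt_sqrt _ h
          nlinarith
      _ = r := Real.sqrt_sq hr.le
end

section
/- Let S be a set of points of the Euclidean plane EuclideanSpace ℝ (Fin 2), r > 0, and let O ≠ O' be two distinct points such that S is contained in the closed ball of radius r centered at O and also in the closed ball of radius r centered at O'. Then there exist a point c and a radius ρ < r such that S is contained in the closed ball of radius ρ centered at c. -/
open Metric

theorem smaller_enclosing_ball_of_two_centers
    (S : Set (EuclideanSpace ℝ (Fin 2))) (r : ℝ) (hr : 0 < r)
    (O O' : EuclideanSpace ℝ (Fin 2)) (hOO' : O ≠ O')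
    (hSO : S ⊆ closedBall O r) (hSO' : S ⊆ closedBall O' r) :
    ∃ (c : EuclideanSpace ℝ (Fin 2)) (ρ : ℝ), ρ < r ∧ S ⊆ closedBall c ρ := by
  rcases S.eq_empty_or_nonempty with hS | hS
  · exact ⟨O, 0, hr, by simp [hS]⟩
  set c := midpoint ℝ O O'
  set d := dist O O' with hd
  have hd0 : 0 < d := dist_pos.2 hOO'
  refine ⟨c, Real.sqrt (r ^ 2 - d ^ 2 / 4), ?_, ?_⟩
  · rw [Real.sqrt_lt' hr]; nlinarith
  · intro x hx
    have h1 : dist x O ≤ r := hSO hx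
    have h2 : dist x O' ≤ r := hSO' hx
    have key := EuclideanGeometry.dist_sq_add_dist_sq_eq_two_mul_dist_midpoint_sq_add_half_dist_sq x O O'
    have hxc : 0 ≤ dist x c := dist_nonneg
    have h1' : 0 ≤ dist x O := dist_nonneg
    have h2' : 0 ≤ dist x O' := dist_nonneg
    have htri : d ≤ dist x O + dist x O' := by
      rw [hd, dist_comm x O] at *
      exact dist_triangle O x O'
    rw [mem_closedBall, Real.le_sqrt hxc]
    · nlinarith
    · nlinarith
end

section
/- Let S be a nonempty finite set of points in the Euclidean plane EuclideanSpace ℝ (Fin 2), and for a point c let f(c) = max_{p ∈ S} dist c p denote the covering radius of S at c. If c and c' are two points such that f(c) ≤ f(c'') and f(c') ≤ f(c'') for every point c'', then c = c'. That is, the center of the smallest enclosing circle of S is unique. -/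
theorem sec_center_unique
    (S : Finset (EuclideanSpace ℝ (Fin 2))) (hS : S.Nonempty)
    (c c' : EuclideanSpace ℝ (Fin 2))
    (hc : ∀ c'' : EuclideanSpace ℝ (Fin 2),
        S.sup' hS (fun p => dist c p) ≤ S.sup' hS (fun p => dist c'' p))
    (hc' : ∀ c'' : EuclideanSpace ℝ (Fin 2),
        S.sup' hS (fun p => dist c' p) ≤ S.sup' hS (fun p => dist c'' p)) :
    c = c' := by
  by_contra hne
  set r : ℝ := S.sup' hS (fun p => dist c p) with hr
  have hrc' : S.sup' hS (fun p => dist c' p) = r := le_antisymm (hc' c) (hc c')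
  set m := midpoint ℝ c c' with hm
  have hd : 0 < dist c c' := dist_pos.mpr hne
  have hr0 : 0 ≤ r := by
    obtain ⟨p, hp⟩ := hS
    exact le_trans dist_nonneg (Finset.le_sup' (fun p => dist c p) hp)
  -- get p achieving sup at m
  obtain ⟨p, hpS, hpm⟩ := Finset.exists_mem_eq_sup' hS (fun p => dist m p)
  have h1 : dist c p ≤ r := Finset.le_sup' (fun p => dist c p) hpS
  have h2 : dist c' p ≤ r := hrc' ▸ Finset.le_sup' (fun p => dist c' p) hpS
  have happ := EuclideanGeometry.dist_sq_add_dist_sq_eq_two_mul_dist_midpoint_sq_add_half_dist_sq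
    p c c'
  have hsq : dist p m ^ 2 < r ^ 2 := by
    have hcsq : dist p c ^ 2 ≤ r ^ 2 := by
      rw [dist_comm]; exact pow_le_pow_left₀ dist_nonneg h1 2
    have hc'sq : dist p c' ^ 2 ≤ r ^ 2 := by
      rw [dist_comm]; exact pow_le_pow_left₀ dist_nonneg h2 2
    nlinarith [sq_nonneg (dist c c'), hd]
  have hlt : dist m p < r := by
    rw [dist_comm] at hsq
    nlinarith [dist_nonneg (x := m) (y := p)]
  have : r ≤ dist m p := by
    calc r ≤ S.sup' hS (fun p => dist m p) := hc m
    _ = dist m p := hpm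
  linarith
end

section
/- Let r and δ be real numbers with 0 < δ ≤ r, and let x ≥ 0 satisfy r² − x² = (r − δ + x)². Then x = (√((r+δ)² − 2δ²) − (r − δ))/2; consequently δ − x = (r+δ)/2 − (1/2)·√((r+δ)² − 2δ²) and δ − x > 0, so that r − δ + x = (r−δ)/2 + (1/2)·√((r+δ)² − 2δ²) < r. -/
theorem lemma_del2_algebra
    (r δ x : ℝ) (hδ : 0 < δ) (hδr : δ ≤ r) (hx : 0 ≤ x)
    (heq : r ^ 2 - x ^ 2 = (r - δ + x) ^ 2) :
    x = (Real.sqrt ((r + δ) ^ 2 - 2 * δ ^ 2) - (r - δ)) / 2 ∧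
    δ - x = (r + δ) / 2 - (1 / 2) * Real.sqrt ((r + δ) ^ 2 - 2 * δ ^ 2) ∧
    δ - x > 0 ∧
    r - δ + x = (r - δ) / 2 + (1 / 2) * Real.sqrt ((r + δ) ^ 2 - 2 * δ ^ 2) ∧
    r - δ + x < r := by
  have hnn : 0 ≤ 2 * x + (r - δ) := by linarith
  have hsq : (r + δ) ^ 2 - 2 * δ ^ 2 = (2 * x + (r - δ)) ^ 2 := by nlinarith [heq]
  have hs : Real.sqrt ((r + δ) ^ 2 - 2 * δ ^ 2) = 2 * x + (r - δ) := by
    rw [hsq, Real.sqrt_sq hnn]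
  have hxδ : x < δ := by nlinarith [hδ, hnn]
  refine ⟨by rw [hs]; ring, by rw [hs]; ring, by linarith, by rw [hs]; ring, by linarith⟩
end

section
/- Let O be a point of the Euclidean plane EuclideanSpace ℝ (Fin 2), r > 0, and let p₁, p₂, p₃ be three points on the sphere of radius r centered at O such that O lies in the convex hull of {p₁, p₂, p₃}. Then for every point c and every radius r' such that p₁, p₂, p₃ all lie in the closed ball of radius r' centered at c, one has r ≤ r'. That is, the circle through the three points is their smallest enclosing circle. -/
open Metric

private lemma key_aux (O c y : EuclideanSpace ℝ (Fin 2)) (r r' : ℝ) (hr : 0 < r)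
    (hy : y ∈ sphere O r) (hip : inner ℝ (y - O) (c - O) ≤ (0:ℝ))
    (hc : y ∈ closedBall c r') : r ≤ r' := by
  rw [mem_sphere, dist_eq_norm] at hy
  rw [mem_closedBall, dist_eq_norm] at hc
  have h1 : r ≤ ‖y - c‖ := by
    have : ‖y - c‖ ^ 2 ≥ r ^ 2 := by
      have : y - c = (y - O) - (c - O) := by abel
      rw [this, norm_sub_sq_real, hy]
      nlinarith [sq_nonneg ‖c - O‖]
    nlinarith [norm_nonneg (y - c)]
  linarith

theorem three_points_sec
    (O : EuclideanSpace ℝ (Fin 2)) (r : ℝ) (hr : 0 < r)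
    (p₁ p₂ p₃ : EuclideanSpace ℝ (Fin 2))
    (h₁ : p₁ ∈ sphere O r) (h₂ : p₂ ∈ sphere O r) (h₃ : p₃ ∈ sphere O r)
    (hO : O ∈ convexHull ℝ ({p₁, p₂, p₃} : Set (EuclideanSpace ℝ (Fin 2)))) :
    ∀ (c : EuclideanSpace ℝ (Fin 2)) (r' : ℝ),
      p₁ ∈ closedBall c r' → p₂ ∈ closedBall c r' → p₃ ∈ closedBall c r' →
      r ≤ r' := by
  intro c r' hc1 hc2 hc3
  classical
  rw [show ({p₁, p₂, p₃} : Set (EuclideanSpace ℝ (Fin 2)))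
      = ↑({p₁, p₂, p₃} : Finset (EuclideanSpace ℝ (Fin 2))) by simp,
    Finset.convexHull_eq] at hO
  obtain ⟨w, hw0, hw1, hcomb⟩ := hO
  set s : Finset (EuclideanSpace ℝ (Fin 2)) := {p₁, p₂, p₃} with hs
  -- Σ w y • (y - O) = 0
  have hsum : ∑ y ∈ s, w y • (y - O) = 0 := by
    have := hcomb
    rw [Finset.centerMass_eq_of_sum_1 _ _ hw1] at this
    simp only [id] at this
    calc ∑ y ∈ s, w y • (y - O) = (∑ y ∈ s, w y • y) - (∑ y ∈ s, w y) • O := by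
          rw [Finset.sum_smul]
          simp [smul_sub, Finset.sum_sub_distrib]
      _ = 0 := by rw [this, hw1, one_smul, sub_self]
  have hinner : ∑ y ∈ s, w y * inner ℝ (y - O) (c - O) = (0:ℝ) := by
    have h0 : (inner ℝ (∑ y ∈ s, w y • (y - O)) (c - O) : ℝ) = 0 := by
      rw [hsum, inner_zero_left]
    rw [sum_inner] at h0
    simp only [real_inner_smul_left] at h0
    exact h0
  have hex : ∃ y ∈ s, inner ℝ (y - O) (c - O) ≤ (0:ℝ) := by
    by_contra hcon
    push_neg at hcon
    have hpos : ∃ y ∈ s, 0 < w y := by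
      by_contra hc'
      push_neg at hc'
      have : ∑ y ∈ s, w y = 0 := Finset.sum_eq_zero fun y hy =>
        le_antisymm (hc' y hy) (hw0 y hy)
      rw [hw1] at this; norm_num at this
    obtain ⟨y₀, hy₀, hwy₀⟩ := hpos
    have : (0:ℝ) < ∑ y ∈ s, w y * inner ℝ (y - O) (c - O) :=
      Finset.sum_pos' (fun y hy => mul_nonneg (hw0 y hy) (le_of_lt (hcon y hy)))
        ⟨y₀, hy₀, mul_pos hwy₀ (hcon y₀ hy₀)⟩
    rw [hinner] at this; exact lt_irrefl _ this
  obtain ⟨y, hy, hip⟩ := hex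
  have hy' : y = p₁ ∨ y = p₂ ∨ y = p₃ := by
    have := hy
    rw [hs] at this
    simpa using this
  rcases hy' with rfl | rfl | rfl
  · exact key_aux O c y r r' hr h₁ hip hc1
  · exact key_aux O c y r r' hr h₂ hip hc2
  · exact key_aux O c y r r' hr h₃ hip hc3
end

section
/- Let O be a point of the Euclidean plane EuclideanSpace ℝ (Fin 2), r > 0, let S be a finite set contained in the closed ball of radius r centered at O, and let B = S ∩ sphere O r be the points of S on the boundary. If O lies in the convex hull of B, then for every point c there exists p ∈ B with dist c p ≥ r; in particular no closed ball of radius strictly less than r contains S, so the smallest enclosing circle of S is the circle of center O and radius r. -/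
open Metric
open scoped RealInnerProductSpace

theorem sec_invariant_of_fixed_boundary
    (O : EuclideanSpace ℝ (Fin 2)) (r : ℝ) (hr : 0 < r)
    (S : Set (EuclideanSpace ℝ (Fin 2))) (hfin : S.Finite)
    (hS : S ⊆ closedBall O r)
    (hO : O ∈ convexHull ℝ (S ∩ sphere O r)) :
    (∀ c : EuclideanSpace ℝ (Fin 2), ∃ p ∈ S ∩ sphere O r, r ≤ dist c p) ∧
    (∀ (c : EuclideanSpace ℝ (Fin 2)) (ρ : ℝ), ρ < r → ¬ S ⊆ closedBall c ρ) := by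
  have key : ∀ c : EuclideanSpace ℝ (Fin 2), ∃ p ∈ S ∩ sphere O r, r ≤ dist c p := by
    intro c
    -- find p in B with inner (c - O) (p - O) ≤ 0
    have hsep : ∃ p ∈ S ∩ sphere O r, ⟪c - O, p - O⟫ ≤ 0 := by
      by_contra h
      push_neg at h
      have hconv : Convex ℝ {x : EuclideanSpace ℝ (Fin 2) | ⟪c - O, O⟫ < ⟪c - O, x⟫} :=
        convex_halfSpace_gt (innerₛₗ ℝ (c - O)).isLinear _
      have hsub : (S ∩ sphere O r) ⊆ {x | ⟪c - O, O⟫ < ⟪c - O, x⟫} := by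
        intro p hp
        have := h p hp
        simp only [Set.mem_setOf_eq]
        rw [inner_sub_right] at this
        linarith
      have := convexHull_min hsub hconv hO
      simp at this
    obtain ⟨p, hpB, hip⟩ := hsep
    refine ⟨p, hpB, ?_⟩
    have hpr : ‖p - O‖ = r := by
      have := hpB.2
      simpa [mem_sphere_iff_norm] using this
    have hsq : ‖(c - O) - (p - O)‖ ^ 2 = ‖c - O‖ ^ 2 - 2 * ⟪c - O, p - O⟫ + ‖p - O‖ ^ 2 :=
      norm_sub_sq_real _ _
    have hcp : dist c p = ‖(c - O) - (p - O)‖ := by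
      rw [dist_eq_norm]; congr 1; abel
    have hd : 0 ≤ dist c p := dist_nonneg
    nlinarith [norm_nonneg (c - O), sq_nonneg (‖c - O‖), hsq, hcp, hpr]
  refine ⟨key, ?_⟩
  intro c ρ hρ hsub
  obtain ⟨p, hpB, hge⟩ := key c
  have := hsub hpB.1
  rw [mem_closedBall, dist_comm] at this
  linarith
end

section
/- Let O be a point of the Euclidean plane EuclideanSpace ℝ (Fin 2), r > 0, and let S be a finite set contained in the closed ball of radius r centered at O. If O does NOT lie in the convex hull of S ∩ sphere O r, then there exist a point c and a radius ρ < r such that S is contained in the closed ball of radius ρ centered at c. -/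
open Metric RealInnerProductSpace

lemma aux_smaller_radius {S : Set (EuclideanSpace ℝ (Fin 2))} (hfin : S.Finite)
    (c : EuclideanSpace ℝ (Fin 2)) {r : ℝ} (hr : 0 < r)
    (h : ∀ x ∈ S, dist x c < r) :
    ∃ ρ : ℝ, ρ < r ∧ S ⊆ closedBall c ρ := by
  rcases S.eq_empty_or_nonempty with rfl | hne
  · exact ⟨0, hr, by simp⟩
  · obtain ⟨x0, hx0, hmax⟩ := hfin.toFinset.exists_max_image (fun x => dist x c)
      (by simpa [Set.Finite.toFinset_nonempty] using hne)
    refine ⟨dist x0 c, h x0 (hfin.mem_toFinset.mp hx0), fun x hx => ?_⟩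
    exact mem_closedBall.mpr (hmax x (hfin.mem_toFinset.mpr hx))

theorem smaller_ball_of_center_not_in_hull
    (O : EuclideanSpace ℝ (Fin 2)) (r : ℝ) (hr : 0 < r)
    (S : Set (EuclideanSpace ℝ (Fin 2))) (hfin : S.Finite)
    (hS : S ⊆ closedBall O r)
    (hO : O ∉ convexHull ℝ (S ∩ sphere O r)) :
    ∃ (c : EuclideanSpace ℝ (Fin 2)) (ρ : ℝ), ρ < r ∧ S ⊆ closedBall c ρ := by
  set B : Set (EuclideanSpace ℝ (Fin 2)) := S ∩ sphere O r with hBdef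
  rcases B.eq_empty_or_nonempty with hBe | ⟨b₀, hb₀⟩
  · refine ⟨O, ?_⟩
    have : ∀ x ∈ S, dist x O < r := by
      intro x hx
      rcases lt_or_eq_of_le (mem_closedBall.mp (hS hx)) with h | h
      · exact h
      · exact absurd (Set.mem_inter hx (mem_sphere.mpr h)) (by rw [← hBdef, hBe]; simp)
    obtain ⟨ρ, hρ, hsub⟩ := aux_smaller_radius hfin O hr this
    exact ⟨ρ, hρ, hsub⟩
  · have hBfin : B.Finite := hfin.inter_of_left _
    have hcl : IsClosed (convexHull ℝ B) := (hBfin.isCompact_convexHull ℝ).isClosed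
    obtain ⟨f, u, hfO, hfb⟩ := geometric_hahn_banach_point_closed
      (convex_convexHull ℝ B) hcl hO
    set v := (InnerProductSpace.toDual ℝ (EuclideanSpace ℝ (Fin 2))).symm f with hv
    have hvf : ∀ y : EuclideanSpace ℝ (Fin 2), ⟪v, y⟫ = f y := fun y => InnerProductSpace.toDual_symm_apply
    set ε := u - f O with hε
    have hεpos : 0 < ε := sub_pos.mpr hfO
    have hBsep : ∀ x ∈ B, ε < ⟪v, x - O⟫ := by
      intro x hx
      have := hfb x (subset_convexHull ℝ B hx)
      rw [hvf, map_sub]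
      linarith
    have hvne : v ≠ 0 := by
      intro h0
      have := hBsep b₀ hb₀
      rw [h0] at this
      simp at this
      linarith
    have hvnorm : 0 < ‖v‖ := norm_pos_iff.mpr hvne
    -- max distance of non-sphere points
    have hAfin : (insert (0:ℝ) ((fun x => dist x O) '' (S \ sphere O r))).Finite :=
      Set.Finite.insert _ ((hfin.diff).image _)
    obtain ⟨m, hm, hmax⟩ := hAfin.toFinset.exists_max_image id (by simp)
    simp only [Set.Finite.mem_toFinset] at hm
    have hm0 : 0 ≤ m := by
      have := hmax 0 (by simp)
      simpa using this
    have hmlt : m < r := by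
      rcases hm with h0 | ⟨x, hx, hxd⟩
      · simpa [h0] using hr
      · rw [← hxd]
        rcases lt_or_eq_of_le (mem_closedBall.mp (hS hx.1)) with h | h
        · exact h
        · exact absurd (mem_sphere.mpr h) hx.2
    have hmle : ∀ x ∈ S \ sphere O r, dist x O ≤ m := by
      intro x hx
      have := hmax (dist x O) (by simp; right; exact ⟨x, hx, rfl⟩)
      simpa using this
    set t := min (ε / ‖v‖ ^ 2) ((r - m) / (2 * ‖v‖)) with ht
    have htpos : 0 < t := lt_min (by positivity) (div_pos (by linarith) (by positivity))
    set c := O + t • v with hc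
    refine ⟨c, ?_⟩
    have key : ∀ x ∈ S, dist x c < r := by
      intro x hx
      by_cases hsph : x ∈ sphere O r
      · -- boundary point
        have hxB : x ∈ B := ⟨hx, hsph⟩
        have hip : ε < ⟪v, x - O⟫ := hBsep x hxB
        have hxO : ‖x - O‖ = r := by
          rw [← dist_eq_norm]; exact mem_sphere.mp hsph
        have hxc : x - c = (x - O) - t • v := by
          rw [hc]; abel
        have hsq : ‖x - c‖ ^ 2 < r ^ 2 := by
          rw [hxc, @norm_sub_sq_real]
          rw [hxO, inner_smul_right, norm_smul, mul_pow]
          have h1 : t ≤ ε / ‖v‖ ^ 2 := min_le_left _ _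
          have h2 : t * ‖v‖ ^ 2 ≤ ε := by
            rw [← le_div_iff₀ (by positivity)] at *
            exact h1
          have hcomm : ⟪x - O, v⟫ = ⟪v, x - O⟫ := real_inner_comm _ _
          rw [hcomm]
          rw [Real.norm_eq_abs, abs_of_pos htpos]
          nlinarith [mul_pos htpos hεpos]
        have := lt_of_pow_lt_pow_left₀ 2 (le_of_lt hr) hsq
        rwa [dist_eq_norm]
      · -- interior point
        have hxA : x ∈ S \ sphere O r := ⟨hx, hsph⟩
        have h1 : dist x c ≤ dist x O + dist O c := dist_triangle _ _ _
        have h2 : dist O c = t * ‖v‖ := by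
          rw [hc, dist_eq_norm]
          simp [norm_smul, abs_of_pos htpos]
        have h3 : t * ‖v‖ ≤ (r - m) / 2 := by
          have : t ≤ (r - m) / (2 * ‖v‖) := min_le_right _ _
          calc t * ‖v‖ ≤ (r - m) / (2 * ‖v‖) * ‖v‖ := by
                exact mul_le_mul_of_nonneg_right this (le_of_lt hvnorm)
            _ = (r - m) / 2 := by field_simp
        have h4 := hmle x hxA
        calc dist x c ≤ dist x O + dist O c := h1
          _ = dist x O + t * ‖v‖ := by rw [h2]
          _ ≤ m + (r - m) / 2 := by linarith
          _ < r := by linarith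
    obtain ⟨ρ, hρ, hsub⟩ := aux_smaller_radius hfin c hr key
    exact ⟨ρ, hρ, hsub⟩
end

section
/- Let O be a point of the Euclidean plane EuclideanSpace ℝ (Fin 2), r > 0, and let S be a finite set of points on the sphere of radius r centered at O such that O lies in the convex hull of S. Then either there exist p, q ∈ S with O = midpoint p q (two points of S forming a diameter), or there exist p, q, s ∈ S such that O lies in the interior of the convex hull of {p, q, s} (three points of S not lying on a common semicircle). -/
open Metric

private lemma two_pt_midpoint {E : Type*} [NormedAddCommGroup E] [NormedSpace ℝ E]
    {O p q : E} {r a b : ℝ} (hr : 0 < r)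
    (hab : a + b = 1) (hO : a • p + b • q = O)
    (hp : dist p O = r) (hq : dist q O = r) :
    O = midpoint ℝ p q := by
  have ha : a = 1 - b := by linarith
  subst ha
  have h1 : p - O = b • (p - q) := by rw [← hO]; module
  have h2 : q - O = (1 - b) • (q - p) := by rw [← hO]; module
  have hnp : dist p O = |b| * ‖p - q‖ := by rw [dist_eq_norm, h1, norm_smul, Real.norm_eq_abs]
  have hnq : dist q O = |1 - b| * ‖q - p‖ := by rw [dist_eq_norm, h2, norm_smul, Real.norm_eq_abs]
  have hpq : ‖p - q‖ = ‖q - p‖ := norm_sub_rev p q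
  have hpos : 0 < ‖p - q‖ := by
    rcases eq_or_lt_of_le (norm_nonneg (p - q)) with h | h
    · exfalso; rw [hnp, ← h, mul_zero] at hp; linarith
    · exact h
  have hb2 : |b| = |1 - b| := by
    have := hp.trans hq.symm
    rw [hnp, hnq, ← hpq] at this
    exact mul_right_cancel₀ (ne_of_gt hpos) this
  have hbhalf : b = 1 / 2 := by
    rcases abs_eq_abs.mp hb2 with h | h <;> linarith
  subst hbhalf
  rw [← hO, midpoint_eq_smul_add, invOf_eq_inv, smul_add]
  norm_num

theorem diameter_or_three_points_not_on_semicircle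
    (O : EuclideanSpace ℝ (Fin 2)) (r : ℝ) (hr : 0 < r)
    (S : Set (EuclideanSpace ℝ (Fin 2))) (hfin : S.Finite)
    (hsphere : S ⊆ sphere O r)
    (hO : O ∈ convexHull ℝ S) :
    (∃ p ∈ S, ∃ q ∈ S, O = midpoint ℝ p q) ∨
    (∃ p ∈ S, ∃ q ∈ S, ∃ s ∈ S,
        O ∈ interior (convexHull ℝ ({p, q, s} : Set (EuclideanSpace ℝ (Fin 2))))) := by
  classical
  rw [convexHull_eq_union] at hO
  simp only [Set.mem_iUnion] at hO
  obtain ⟨t, hts, hai, hOt⟩ := hO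
  rw [Finset.convexHull_eq] at hOt
  obtain ⟨w, hw0, hw1, hwO⟩ := hOt
  set t' : Finset (EuclideanSpace ℝ (Fin 2)) := {i ∈ t | w i ≠ 0} with ht'def
  have ht't : t' ⊆ t := Finset.filter_subset _ _
  have ht'S : ∀ x ∈ t', x ∈ S := fun x hx => hts (ht't hx)
  have hw1' : ∑ y ∈ t', w y = 1 := by
    rw [ht'def, Finset.sum_filter_ne_zero]; exact hw1
  have hwpos : ∀ y ∈ t', 0 < w y := fun y hy =>
    lt_of_le_of_ne (hw0 y (ht't hy)) (Ne.symm (Finset.mem_filter.mp hy).2)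
  have hwO' : ∑ y ∈ t', w y • y = O := by
    have h0 := Finset.centerMass_filter_ne_zero (t := t) (w := w) (z := id)
    rw [hwO] at h0
    have h1 : t'.centerMass w id = ∑ y ∈ t', w y • id y :=
      Finset.centerMass_eq_of_sum_1 _ id hw1'
    simp only [id] at h1
    rw [← h1]
    exact h0
  have hdist : ∀ x ∈ t', dist x O = r := fun x hx => hsphere (ht'S x hx) 
  have hai' : AffineIndependent ℝ ((↑) : t' → EuclideanSpace ℝ (Fin 2)) := by
    exact hai.mono (by exact_mod_cast ht't)
  have hcard : t'.card ≤ 3 := by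
    have h1 := hai'.card_le_finrank_succ
    have h2 := Submodule.finrank_le (vectorSpan ℝ (Set.range ((↑) : t' → EuclideanSpace ℝ (Fin 2))))
    rw [finrank_euclideanSpace_fin] at h2
    rw [Fintype.card_coe] at h1
    omega
  have hne : t'.Nonempty := by
    rcases Finset.eq_empty_or_nonempty t' with h | h
    · exfalso; rw [h, Finset.sum_empty] at hw1'; norm_num at hw1'
    · exact h
  have hcard1 : 1 ≤ t'.card := Finset.card_pos.mpr hne
  interval_cases h : t'.card
  · -- card = 1
    obtain ⟨p, hp⟩ := Finset.card_eq_one.mp h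
    exfalso
    have hpmem : p ∈ t' := by rw [hp]; exact Finset.mem_singleton_self p
    rw [hp, Finset.sum_singleton] at hw1' hwO'
    rw [hw1', one_smul] at hwO'
    have := hdist p hpmem
    rw [← hwO', dist_self] at this
    linarith
  · -- card = 2
    obtain ⟨p, q, hpq, hpq2⟩ := Finset.card_eq_two.mp h
    have hpmem : p ∈ t' := by rw [hpq2]; simp
    have hqmem : q ∈ t' := by rw [hpq2]; simp
    rw [hpq2, Finset.sum_pair hpq] at hw1' hwO'
    left
    exact ⟨p, ht'S p hpmem, q, ht'S q hqmem,
      two_pt_midpoint hr hw1' hwO' (hdist p hpmem) (hdist q hqmem)⟩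
  · -- card = 3
    obtain ⟨p, q, s, hpq, hps, hqs, heq⟩ := Finset.card_eq_three.mp h
    right
    have hpmem : p ∈ t' := by rw [heq]; simp
    have hqmem : q ∈ t' := by rw [heq]; simp
    have hsmem : s ∈ t' := by rw [heq]; simp
    refine ⟨p, ht'S p hpmem, q, ht'S q hqmem, s, ht'S s hsmem, ?_⟩
    have htot : affineSpan ℝ (Set.range ((↑) : t' → EuclideanSpace ℝ (Fin 2))) = ⊤ := by
      rw [hai'.affineSpan_eq_top_iff_card_eq_finrank_add_one, Fintype.card_coe,
        finrank_euclideanSpace_fin, h]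
    let b : AffineBasis ↥t' ℝ (EuclideanSpace ℝ (Fin 2)) := ⟨(↑), hai', htot⟩
    have hrange : Set.range b = (↑t' : Set (EuclideanSpace ℝ (Fin 2))) := Subtype.range_coe
    have hsum : ∑ i : ↥t', w ↑i = 1 := by rw [Finset.sum_coe_sort t' w]; exact hw1'
    have hcomb : Finset.univ.affineCombination ℝ ((↑) : t' → EuclideanSpace ℝ (Fin 2)) (fun i => w ↑i) = O := by
      rw [affineCombination_eq_centerMass hsum, Finset.centerMass_eq_of_sum_1 _ _ hsum]
      rw [← hwO', ← Finset.sum_coe_sort t' (fun y => w y • y)]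
    have hsetEq : ({p, q, s} : Set (EuclideanSpace ℝ (Fin 2))) = (↑t' : Set (EuclideanSpace ℝ (Fin 2))) := by
      rw [heq]; simp
    rw [hsetEq, ← hrange, b.interior_convexHull]
    intro i
    have hco : b.coord i O = w ↑i := by
      rw [← hcomb]
      exact b.coord_apply_combination_of_mem (Finset.mem_univ i) hsum
    rw [hco]
    exact hwpos (↑i) i.2
end
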